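/- Let V be a finite set, k ≥ 2 an integer, and w : V → ℝ with 0 ≤ w(x) ≤ 1 for all x ∈ V and 3k/2 − 2 ≤ Σ_{x∈V} w(x) ≤ 3k/2. Then Σ_{S ⊆ V, |S| ≥ k−1} P^V[S] · (k/(|S|+1)) ≥ (1/2) · (1 − e^{−k/36} − e^{−k/54}). -/
import Mathlib


open Finset

/-- `Pw w V S = (∏_{x∈S} w(x)) · (∏_{x∈V∖S} (1 − w(x)))`. -/
def Pw {α : Type*} [DecidableEq α] (w : α → ℝ) (V S : Finset α) : ℝ :=
  (∏ x ∈ S, w x) * (∏ x ∈ V \ S, (1 - w x))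

section aux
set_option linter.unusedSectionVars false
variable {α : Type*} [Fintype α] [DecidableEq α] (w : α → ℝ)

lemma Pw_nonneg (hw : ∀ x, 0 ≤ w x ∧ w x ≤ 1) (S : Finset α) :
    0 ≤ Pw w univ S :=
  mul_nonneg (prod_nonneg fun x _ => (hw x).1)
    (prod_nonneg fun x _ => by linarith [(hw x).2])

lemma mgf_Pw (r : ℝ) :
    ∑ S ∈ (univ : Finset α).powerset, Pw w univ S * r ^ S.card
      = ∏ x, (w x * r + (1 - w x)) := by
  rw [Finset.prod_add]
  refine sum_congr rfl fun S hS => ?_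
  rw [Pw, prod_mul_distrib, prod_const]
  ring

lemma mgf_Pw_le (hw : ∀ x, 0 ≤ w x ∧ w x ≤ 1) (r : ℝ) (hr : 0 ≤ r) :
    ∏ x, (w x * r + (1 - w x)) ≤ Real.exp ((r - 1) * ∑ x, w x) := by
  have h1 : ∏ x, (w x * r + (1 - w x)) ≤ ∏ x : α, Real.exp (w x * (r - 1)) := by
    apply Finset.prod_le_prod
    · intro x _; nlinarith [(hw x).1, (hw x).2, mul_nonneg (hw x).1 hr]
    · intro x _; have := Real.add_one_le_exp (w x * (r - 1)); linarith
  calc ∏ x, (w x * r + (1 - w x)) ≤ ∏ x : α, Real.exp (w x * (r - 1)) := h1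
    _ = Real.exp (∑ x, w x * (r - 1)) := (Real.exp_sum _ _).symm
    _ = Real.exp ((r - 1) * ∑ x, w x) := by rw [← Finset.sum_mul, mul_comm]

lemma tail_key (hw : ∀ x, 0 ≤ w x ∧ w x ≤ 1) (p : Finset α → Prop) [DecidablePred p]
    (m : ℕ) (r : ℝ) (hr0 : 0 < r)
    (hp : ∀ S, p S → r ^ m ≤ r ^ S.card) :
    ∑ S ∈ (univ : Finset α).powerset.filter p, Pw w univ S
      ≤ r⁻¹ ^ m * Real.exp ((r - 1) * ∑ x, w x) := by
  have key : (∑ S ∈ (univ : Finset α).powerset.filter p, Pw w univ S) * r ^ m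
      ≤ Real.exp ((r - 1) * ∑ x, w x) := by
    calc (∑ S ∈ (univ : Finset α).powerset.filter p, Pw w univ S) * r ^ m
        = ∑ S ∈ (univ : Finset α).powerset.filter p, Pw w univ S * r ^ m := by
          rw [sum_mul]
      _ ≤ ∑ S ∈ (univ : Finset α).powerset.filter p, Pw w univ S * r ^ S.card :=
          sum_le_sum fun S hS =>
            mul_le_mul_of_nonneg_left (hp S (mem_filter.1 hS).2) (Pw_nonneg w hw S)
      _ ≤ ∑ S ∈ (univ : Finset α).powerset, Pw w univ S * r ^ S.card :=
          sum_le_sum_of_subset_of_nonneg (filter_subset _ _)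
            (fun S _ _ => mul_nonneg (Pw_nonneg w hw S) (pow_nonneg hr0.le _))
      _ = ∏ x, (w x * r + (1 - w x)) := mgf_Pw w r
      _ ≤ Real.exp ((r - 1) * ∑ x, w x) := mgf_Pw_le w hw r hr0.le
  rw [inv_pow, inv_mul_eq_div, le_div_iff₀ (pow_pos hr0 m)]
  exact key

lemma total_one_Pw : ∑ S ∈ (univ : Finset α).powerset, Pw w univ S = 1 := by
  have h := mgf_Pw (α := α) w 1
  simpa using h

end aux

/-- for `k ≥ 2` and weights in `[0,1]` with
`3k/2 − 2 ≤ Σ_{x∈V} w(x) ≤ 3k/2`,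
`Σ_{S ⊆ V, |S| ≥ k−1} P^V[S]·(k/(|S|+1)) ≥ (1/2)·(1 − e^{−k/36} − e^{−k/54})`. -/
theorem stmt15 {α : Type*} [Fintype α] [DecidableEq α] (w : α → ℝ)
    (hw : ∀ x, 0 ≤ w x ∧ w x ≤ 1) (k : ℕ) (hk : 2 ≤ k)
    (hsum_lo : 3 * (k : ℝ) / 2 - 2 ≤ ∑ x, w x)
    (hsum_hi : ∑ x, w x ≤ 3 * (k : ℝ) / 2) :
    (1/2) * (1 - Real.exp (-(k : ℝ) / 36) - Real.exp (-(k : ℝ) / 54))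
      ≤ ∑ S ∈ (univ : Finset α).powerset.filter (fun S => k - 1 ≤ S.card),
          Pw w univ S * ((k : ℝ) / ((S.card : ℝ) + 1)) := by
  classical
  have hk2 : (2:ℝ) ≤ (k:ℝ) := by exact_mod_cast hk
  have hW0 : (0:ℝ) ≤ ∑ x, w x := by linarith
  -- numeric facts about exp(±1/3)
  have hex_pos := Real.exp_pos (1/3 : ℝ)
  have e13lo : (4:ℝ)/3 ≤ Real.exp (1/3) := by
    have := Real.add_one_le_exp (1/3 : ℝ); linarith
  have h3 : Real.exp (1/3 : ℝ) ^ (3:ℕ) = Real.exp 1 := by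
    rw [← Real.exp_nat_mul]; norm_num
  have e13hi : Real.exp (1/3 : ℝ) ≤ 77/54 := by
    by_contra hcon
    push_neg at hcon
    have h1 : ((77:ℝ)/54)^(3:ℕ) < Real.exp (1/3) ^ (3:ℕ) :=
      pow_lt_pow_left₀ hcon (by norm_num) (by norm_num)
    rw [h3] at h1
    have h2 := Real.exp_one_lt_d9
    norm_num at h1 h2
    linarith
  have hmul1 : Real.exp (-(1/3) : ℝ) * Real.exp (1/3 : ℝ) = 1 := by
    rw [← Real.exp_add]; norm_num
  have eneghi : Real.exp (-(1/3) : ℝ) ≤ 3/4 := by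
    nlinarith [Real.exp_pos (-(1/3) : ℝ)]
  -- upper tail
  have hU : ∑ S ∈ (univ : Finset α).powerset.filter (fun S => 2*k ≤ S.card), Pw w univ S
      ≤ Real.exp (-(k:ℝ)/36) := by
    have h := tail_key w hw (fun S => 2*k ≤ S.card) (2*k) (Real.exp (1/3)) hex_pos
      (fun S hS => pow_le_pow_right₀ (by linarith) hS)
    have hpow : (Real.exp (1/3:ℝ))⁻¹ ^ (2*k) = Real.exp (-(((2*k:ℕ)):ℝ)/3) := by
      rw [← Real.exp_neg, ← Real.exp_nat_mul]
      congr 1; push_cast; ring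
    rw [hpow, ← Real.exp_add] at h
    refine h.trans (Real.exp_le_exp.2 ?_)
    have hrw : (Real.exp (1/3:ℝ) - 1) * (∑ x, w x) ≤ (23/54) * (3*(k:ℝ)/2) :=
      mul_le_mul (by linarith) hsum_hi hW0 (by norm_num)
    push_cast
    linarith
  -- lower tail
  have hL : ∑ S ∈ (univ : Finset α).powerset.filter (fun S => ¬ (k - 1 ≤ S.card)), Pw w univ S
      ≤ Real.exp (-(k:ℝ)/54) := by
    have h := tail_key w hw (fun S => ¬ (k - 1 ≤ S.card)) (k-2) (Real.exp (-(1/3)))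
      (Real.exp_pos _)
      (fun S hS => pow_le_pow_of_le_one (Real.exp_pos _).le (by linarith) (by omega))
    have hpow : (Real.exp (-(1/3):ℝ))⁻¹ ^ (k-2) = Real.exp (((k-2:ℕ):ℝ)/3) := by
      rw [← Real.exp_neg, ← Real.exp_nat_mul]
      congr 1; push_cast; ring
    rw [hpow, ← Real.exp_add] at h
    refine h.trans (Real.exp_le_exp.2 ?_)
    have hcast : ((k-2:ℕ):ℝ) = (k:ℝ) - 2 := by
      rw [Nat.cast_sub hk]; norm_num
    have hrw : (Real.exp (-(1/3):ℝ) - 1) * (∑ x, w x) ≤ -(1/4) * (∑ x, w x) :=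
      mul_le_mul_of_nonneg_right (by linarith) hW0
    rw [hcast]
    nlinarith [hsum_lo]
  -- splitting the probability mass
  have htot := total_one_Pw (α := α) w
  have hsplit1 :
      (∑ S ∈ (univ : Finset α).powerset.filter (fun S => k-1 ≤ S.card), Pw w univ S)
      + ∑ S ∈ (univ : Finset α).powerset.filter (fun S => ¬ (k-1 ≤ S.card)), Pw w univ S
        = 1 := by
    rw [sum_filter_add_sum_filter_not]; exact htot
  have hsplit2 :
      (∑ S ∈ ((univ : Finset α).powerset.filter (fun S => k-1 ≤ S.card)).filter
          (fun S => S.card < 2*k), Pw w univ S)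
      + ∑ S ∈ ((univ : Finset α).powerset.filter (fun S => k-1 ≤ S.card)).filter
          (fun S => ¬ S.card < 2*k), Pw w univ S
        = ∑ S ∈ (univ : Finset α).powerset.filter (fun S => k-1 ≤ S.card), Pw w univ S :=
    sum_filter_add_sum_filter_not _ _ _
  have hUeq : ((univ : Finset α).powerset.filter (fun S => k-1 ≤ S.card)).filter
        (fun S => ¬ S.card < 2*k)
      = (univ : Finset α).powerset.filter (fun S => 2*k ≤ S.card) := by
    rw [filter_filter]
    exact filter_congr fun S _ => by omega
  rw [hUeq] at hsplit2
  -- middle part estimate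
  have hmid : (1/2) * (∑ S ∈ ((univ : Finset α).powerset.filter (fun S => k-1 ≤ S.card)).filter
        (fun S => S.card < 2*k), Pw w univ S)
      ≤ ∑ S ∈ ((univ : Finset α).powerset.filter (fun S => k-1 ≤ S.card)).filter
          (fun S => S.card < 2*k), Pw w univ S * ((k:ℝ)/((S.card:ℝ)+1)) := by
    rw [mul_sum]
    refine sum_le_sum fun S hS => ?_
    have hc : S.card < 2*k := (mem_filter.1 hS).2
    have hc' : ((S.card:ℝ)) + 1 ≤ 2*(k:ℝ) := by
      have : (S.card + 1 : ℕ) ≤ 2*k := hc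
      exact_mod_cast this
    have hpos : (0:ℝ) < (S.card:ℝ) + 1 := by positivity
    have hhalf : (1/2:ℝ) ≤ (k:ℝ)/((S.card:ℝ)+1) := by
      rw [le_div_iff₀ hpos]; linarith
    rw [mul_comm (Pw w univ S)]
    exact mul_le_mul_of_nonneg_right hhalf (Pw_nonneg w hw S)
  have hdrop : ∑ S ∈ ((univ : Finset α).powerset.filter (fun S => k-1 ≤ S.card)).filter
        (fun S => S.card < 2*k), Pw w univ S * ((k:ℝ)/((S.card:ℝ)+1))
      ≤ ∑ S ∈ (univ : Finset α).powerset.filter (fun S => k-1 ≤ S.card),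
          Pw w univ S * ((k:ℝ)/((S.card:ℝ)+1)) :=
    sum_le_sum_of_subset_of_nonneg (filter_subset _ _)
      (fun S _ _ => mul_nonneg (Pw_nonneg w hw S) (by positivity))
  linarith
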